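/- Fix q ≥ 2 and define Δ(ℓ) = (q²−1)ℓ + q·S(ℓ,q) for integers ℓ coprime to q. Then Δ(ℓ) ≡ ℓ* (mod q), where ℓℓ* ≡ 1 (mod q); in particular Δ induces a bijection from (ℤ/qℤ)ˣ to itself. -/

import Mathlib

def saw (x : ℚ) : ℚ := if x.den = 1 then 0 else Int.fract x - 1/2

def S (a b : ℤ) : ℚ :=
  12 * ∑ k ∈ Finset.Icc 1 b.toNat, saw ((k : ℚ) / (b : ℚ)) * saw (((a : ℚ) * k) / (b : ℚ))

def Δ (q l : ℤ) : ℚ := ((q ^ 2 - 1 : ℤ) : ℚ) * l + (q : ℚ) * S l q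

lemma saw_intCast (z : ℤ) : saw (z : ℚ) = 0 := by
  simp [saw]

lemma saw_eq (c b : ℤ) (hb : 0 < b) (hnd : ¬ b ∣ c) :
    saw ((c:ℚ)/(b:ℚ)) = ((c % b : ℤ):ℚ)/(b:ℚ) - 1/2 := by
  have hb0 : (b:ℚ) ≠ 0 := by exact_mod_cast hb.ne'
  have hsplit : (c:ℚ)/(b:ℚ) = ((c / b : ℤ) : ℚ) + ((c % b : ℤ):ℚ)/(b:ℚ) := by
    have h := Int.mul_ediv_add_emod c b
    have h2 : ((b:ℚ) * ((c/b : ℤ):ℚ) + ((c % b : ℤ):ℚ)) = (c:ℚ) := by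
      exact_mod_cast congrArg (fun z : ℤ => (z:ℚ)) h
    field_simp
    linarith
  have hr0 : 0 ≤ c % b := Int.emod_nonneg c hb.ne'
  have hrb : c % b < b := Int.emod_lt_of_pos c hb
  have hfr : Int.fract ((c:ℚ)/(b:ℚ)) = ((c % b : ℤ):ℚ)/(b:ℚ) := by
    rw [hsplit, Int.fract_intCast_add, Int.fract_eq_self.mpr]
    constructor
    · positivity
    · rw [div_lt_one (by exact_mod_cast hb)]
      exact_mod_cast hrb
  have hden : ((c:ℚ)/(b:ℚ)).den ≠ 1 := by
    intro h
    rw [Rat.den_eq_one_iff] at h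
    apply hnd
    have h3 : (((c:ℚ)/(b:ℚ)).num : ℚ) * b = (c:ℚ) := by
      rw [h]; field_simp
    have : c = ((c:ℚ)/(b:ℚ)).num * b := by exact_mod_cast h3.symm
    exact ⟨_, by rw [this]; ring⟩
  rw [saw, if_neg hden, hfr]

lemma gauss1 (m : ℕ) : 2 * ∑ k ∈ Finset.range m, (k:ℤ) = m * (m - 1) := by
  induction m with
  | zero => simp
  | succ n ih => rw [Finset.sum_range_succ]; push_cast; push_cast at ih; ring_nf; ring_nf at ih; linarith

lemma gauss2 (m : ℕ) : 6 * ∑ k ∈ Finset.range m, (k:ℤ)^2 = m * (m - 1) * (2*m - 1) := by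
  induction m with
  | zero => simp
  | succ n ih => rw [Finset.sum_range_succ]; push_cast; push_cast at ih; ring_nf; ring_nf at ih; linarith


lemma mem_aux (q b : ℤ) (hq : 2 ≤ q) (hb : IsCoprime b q) (k : ℕ)
    (hk : k ∈ Finset.Icc 1 (q.toNat - 1)) :
    ((b * (k:ℤ)) % q).toNat ∈ Finset.Icc 1 (q.toNat - 1) := by
  rw [Finset.mem_Icc] at hk ⊢
  have hq0 : (0:ℤ) < q := by omega
  have ht : (q.toNat : ℤ) = q := Int.toNat_of_nonneg (by omega)
  have h0 : 0 ≤ (b * (k:ℤ)) % q := Int.emod_nonneg _ hq0.ne'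
  have h1 : (b * (k:ℤ)) % q < q := Int.emod_lt_of_pos _ hq0
  have hne : (b * (k:ℤ)) % q ≠ 0 := by
    intro h
    have hdvd : q ∣ b * (k:ℤ) := Int.dvd_of_emod_eq_zero h
    have : q ∣ (k:ℤ) := (hb.symm).dvd_of_dvd_mul_left hdvd
    have := Int.le_of_dvd (by exact_mod_cast Nat.lt_of_lt_of_le Nat.zero_lt_one hk.1) this
    omega
  omega

lemma comp_aux (q b c : ℤ) (hq : 2 ≤ q) (hbc : q ∣ b * c - 1) (k : ℕ)
    (hk : k ∈ Finset.Icc 1 (q.toNat - 1)) :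
    ((c * (((b * (k:ℤ)) % q).toNat : ℤ)) % q).toNat = k := by
  rw [Finset.mem_Icc] at hk
  have hq0 : (0:ℤ) < q := by omega
  have h0 : 0 ≤ (b * (k:ℤ)) % q := Int.emod_nonneg _ hq0.ne'
  rw [Int.toNat_of_nonneg h0]
  obtain ⟨e, he⟩ := hbc
  have h1 : (c * ((b * (k:ℤ)) % q)) % q = (c * (b * (k:ℤ))) % q := by
    conv_rhs => rw [Int.mul_emod]
    rw [Int.mul_emod, Int.emod_emod_of_dvd _ dvd_rfl]
  have h2 : (c * (b * (k:ℤ))) % q = (k:ℤ) % q := by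
    have : (k:ℤ) ≡ c * (b * (k:ℤ)) [ZMOD q] :=
      Int.modEq_iff_dvd.mpr ⟨k * e, by linear_combination (k:ℤ) * he⟩
    exact this.symm
  have hkq : (k:ℤ) % q = (k:ℤ) := Int.emod_eq_of_lt (by positivity) (by omega)
  rw [h1, h2, hkq, Int.toNat_natCast]

lemma perm_sum (q a a' v : ℤ) (hq : 2 ≤ q) (ha : IsCoprime a q) (hav : a' * a + v * q = 1)
    (F : ℤ → ℤ) :
    ∑ k ∈ Finset.Icc 1 (q.toNat - 1), F ((a * (k:ℤ)) % q)
      = ∑ k ∈ Finset.Icc 1 (q.toNat - 1), F (k:ℤ) := by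
  have ha' : IsCoprime a' q := ⟨a, v, by linarith⟩
  refine Finset.sum_nbij' (fun k => ((a * (k:ℤ)) % q).toNat)
    (fun k => ((a' * (k:ℤ)) % q).toNat)
    (fun k hk => mem_aux q a hq ha k hk)
    (fun k hk => mem_aux q a' hq ha' k hk)
    (fun k hk => comp_aux q a a' hq ⟨-v, by linarith⟩ k hk)
    (fun k hk => comp_aux q a' a hq ⟨-v, by linarith⟩ k hk)
    (fun k hk => ?_)
  rw [Int.toNat_of_nonneg (Int.emod_nonneg _ (by omega))]

lemma main (q a : ℤ) (hq : 2 ≤ q) (h : IsCoprime a q) :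
    ∃ n : ℤ, (n:ℚ) = (q:ℚ) * S a q ∧ q ∣ a * n - (1 + a^2) := by
  obtain ⟨a', v, hav⟩ := id h
  have hq0 : (0:ℤ) < q := by omega
  have hqQ : (q:ℚ) ≠ 0 := by exact_mod_cast hq0.ne'
  set t := q.toNat with htdef
  have ht : (t:ℤ) = q := Int.toNat_of_nonneg (by omega)
  have ht2 : 2 ≤ t := by omega
  set s : Finset ℕ := Finset.Icc 1 (t - 1) with hsdef
  have hks : ∀ k ∈ s, 1 ≤ k ∧ (k:ℤ) < q := by
    intro k hk
    rw [hsdef, Finset.mem_Icc] at hk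
    exact ⟨hk.1, by omega⟩
  have hndvd_k : ∀ k ∈ s, ¬ (q ∣ (k:ℤ)) := by
    intro k hk hd
    obtain ⟨hk1, hk2⟩ := hks k hk
    have := Int.le_of_dvd (by exact_mod_cast hk1) hd
    omega
  have hndvd_ak : ∀ k ∈ s, ¬ (q ∣ a * (k:ℤ)) := by
    intro k hk hd
    exact hndvd_k k hk ((h.symm).dvd_of_dvd_mul_left hd)
  -- split off the top term k = t
  have hIcc : Finset.Icc 1 t = insert t s := by
    rw [hsdef]; ext x; simp only [Finset.mem_Icc, Finset.mem_insert]; omega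
  have hts : t ∉ s := by rw [hsdef]; simp only [Finset.mem_Icc]; omega
  have htop : saw ((t : ℚ) / (q : ℚ)) * saw (((a : ℚ) * t) / (q : ℚ)) = 0 := by
    have h1 : ((t:ℕ) : ℚ) / (q:ℚ) = ((1:ℤ):ℚ) := by
      rw [show ((t:ℕ):ℚ) = (q:ℚ) by exact_mod_cast congrArg (fun z : ℤ => (z:ℚ)) ht]
      simp [hqQ]
    rw [h1, saw_intCast, zero_mul]
  -- rewrite S as a sum over s with explicit sawtooth values
  have hS : S a q = 12 * ∑ k ∈ s,
      (((a * (k:ℤ) % q : ℤ):ℚ)/(q:ℚ) - 1/2) * (((k:ℤ):ℚ)/(q:ℚ) - 1/2) := by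
    rw [S, ← htdef, hIcc, Finset.sum_insert hts, htop, zero_add]
    congr 1
    apply Finset.sum_congr rfl
    intro k hk
    have e1 : ((k:ℕ):ℚ) / (q:ℚ) = (((k:ℤ)):ℚ)/(q:ℚ) := by push_cast; ring
    have e2 : ((a:ℚ) * (k:ℕ)) / (q:ℚ) = (((a * (k:ℤ)):ℤ):ℚ)/(q:ℚ) := by push_cast; ring
    have e3 : (k:ℤ) % q = (k:ℤ) := Int.emod_eq_of_lt (by positivity) (hks k hk).2
    rw [e1, e2, saw_eq _ q hq0 (hndvd_k k hk), saw_eq _ q hq0 (hndvd_ak k hk), e3]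
    ring
  -- integer sums
  set P : ℤ := ∑ k ∈ s, (k:ℤ) * ((a*(k:ℤ)) % q) with hPdef
  set K1 : ℤ := ∑ k ∈ s, (k:ℤ) with hK1def
  set K2 : ℤ := ∑ k ∈ s, (k:ℤ)^2 with hK2def
  set R1 : ℤ := ∑ k ∈ s, ((a*(k:ℤ)) % q) with hR1def
  set R2 : ℤ := ∑ k ∈ s, ((a*(k:ℤ)) % q)^2 with hR2def
  set T : ℤ := ∑ k ∈ s, (k:ℤ) * ((a*(k:ℤ)) / q) with hTdef
  set D : ℤ := ∑ k ∈ s, ((a*(k:ℤ)) / q)^2 with hDdef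
  set W : ℤ := ∑ k ∈ s, (2*(k:ℤ) - q) * (2*((a*(k:ℤ)) % q) - q) with hWdef
  -- S in terms of W
  have hpoint : ∀ k ∈ s,
      (((a * (k:ℤ) % q : ℤ):ℚ)/(q:ℚ) - 1/2) * (((k:ℤ):ℚ)/(q:ℚ) - 1/2)
        = (((2*(k:ℤ) - q) * (2*((a*(k:ℤ)) % q) - q) : ℤ):ℚ)/(4*(q:ℚ)^2) := by
    intro k hk
    push_cast
    field_simp
    ring
  have hSW : S a q = 3 * ((W:ℤ):ℚ)/(q:ℚ)^2 := by
    rw [hS, Finset.sum_congr rfl hpoint, ← Finset.sum_div, ← Int.cast_sum, ← hWdef]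
    field_simp
    ring
  -- W expanded
  have hWint : W = 4*P - 2*q*K1 - 2*q*R1 + (q-1)*q^2 := by
    have hcard : (s.card : ℤ) = q - 1 := by
      rw [hsdef, Nat.card_Icc] ; omega
    have e : ∀ k ∈ s, (2*(k:ℤ) - q) * (2*((a*(k:ℤ)) % q) - q)
        = 4*((k:ℤ) * ((a*(k:ℤ)) % q)) - 2*q*(k:ℤ) - 2*q*((a*(k:ℤ)) % q) + q^2 := by
      intros; ring
    rw [hWdef, Finset.sum_congr rfl e]
    rw [Finset.sum_add_distrib, Finset.sum_sub_distrib, Finset.sum_sub_distrib,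
      ← Finset.mul_sum, ← Finset.mul_sum, ← Finset.mul_sum, Finset.sum_const, nsmul_eq_mul]
    rw [hPdef, hK1def, hR1def, hcard]
  -- permutation
  have hR1K : R1 = K1 := by
    rw [hR1def, hK1def]
    simpa using perm_sum q a a' v hq h hav (fun x => x)
  have hR2K : R2 = K2 := by
    rw [hR2def, hK2def]
    simpa using perm_sum q a a' v hq h hav (fun x => x^2)
  -- P in terms of K2, T
  have hPeq : P = a*K2 - q*T := by
    rw [hPdef, hK2def, hTdef, Finset.mul_sum, Finset.mul_sum, ← Finset.sum_sub_distrib]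
    exact Finset.sum_congr rfl fun k _ => by rw [Int.emod_def]; ring
  -- the square identity
  have hDeq : R2 + a^2*K2 - 2*a*P = q^2*D := by
    rw [hR2def, hK2def, hPdef, hDdef, Finset.mul_sum, Finset.mul_sum, Finset.mul_sum,
      ← Finset.sum_add_distrib, ← Finset.sum_sub_distrib]
    exact Finset.sum_congr rfl fun k _ => by rw [Int.emod_def]; ring
  -- Gauss sums
  have hrange : Finset.range t = insert 0 s := by
    rw [hsdef]; ext x; simp only [Finset.mem_range, Finset.mem_insert, Finset.mem_Icc]; omega
  have h0s : 0 ∉ s := by rw [hsdef]; simp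
  have g1 := gauss1 t
  have g2 := gauss2 t
  rw [hrange, Finset.sum_insert h0s] at g1 g2
  have hK1g : 2*K1 = q*(q-1) := by
    rw [hK1def]; push_cast at g1; rw [ht] at g1; linarith
  have hK2g : 6*K2 = q*(q-1)*(2*q-1) := by
    rw [hK2def]; push_cast at g2; rw [ht] at g2; linarith
  -- define n
  refine ⟨2*a*(q-1)*(2*q-1) - 12*T - 3*q*(q-1), ?_, ?_⟩
  · -- cast equality
    have h12P : 12*P = q*(2*a*(q-1)*(2*q-1) - 12*T - 3*q*(q-1)) + 3*q^2*(q-1) := by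
      linear_combination 12*hPeq + 2*a*hK2g
    have hqn3W : q*(2*a*(q-1)*(2*q-1) - 12*T - 3*q*(q-1)) = 3*W := by
      linear_combination -3*hWint - 12*hPeq + 6*q*hK1g + 6*q*hR1K - 2*a*hK2g
    have hcast : ((q*(2*a*(q-1)*(2*q-1) - 12*T - 3*q*(q-1)) : ℤ):ℚ) = ((3*W : ℤ):ℚ) := by
      exact_mod_cast congrArg (fun z : ℤ => (z:ℚ)) hqn3W
    push_cast at hcast
    rw [hSW]
    field_simp
    push_cast
    linear_combination hcast
  · -- congruence
    refine ⟨(1+a^2)*(2*q-3) - 3*a*(q-1) - 6*D, ?_⟩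
    have h12P : 12*P = q*(2*a*(q-1)*(2*q-1) - 12*T - 3*q*(q-1)) + 3*q^2*(q-1) := by
      linear_combination 12*hPeq + 2*a*hK2g
    apply mul_left_cancel₀ hq0.ne'
    linear_combination (a^2+1)*hK2g - a*h12P - 6*hDeq + 6*hR2K

lemma delta_int (q a : ℤ) (hq : 2 ≤ q) (h : IsCoprime a q) :
    ∃ N : ℤ, (N:ℚ) = Δ q a ∧ q ∣ a * N - 1 := by
  obtain ⟨n, hn, hd⟩ := main q a hq h
  refine ⟨(q^2-1)*a + n, ?_, ?_⟩
  · rw [Δ, ← hn]; push_cast; ring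
  · obtain ⟨e, he⟩ := hd
    exact ⟨a^2*q + e, by linear_combination he⟩

theorem stmt6 (q : ℤ) (hq : 2 ≤ q) :
    (∀ l lstar : ℤ, IsCoprime l q → l * lstar ≡ 1 [ZMOD q] →
      ∃ n : ℤ, (n : ℚ) = Δ q l ∧ n ≡ lstar [ZMOD q]) ∧
    (∀ m : ℤ, IsCoprime m q →
      ∃ l : ℤ, IsCoprime l q ∧ ∃ n : ℤ, (n : ℚ) = Δ q l ∧ n ≡ m [ZMOD q]) ∧
    (∀ l₁ l₂ n₁ n₂ : ℤ, IsCoprime l₁ q → IsCoprime l₂ q →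
      (n₁ : ℚ) = Δ q l₁ → (n₂ : ℚ) = Δ q l₂ → n₁ ≡ n₂ [ZMOD q] → l₁ ≡ l₂ [ZMOD q]) := by
  refine ⟨?_, ?_, ?_⟩
  · intro l lstar hl h1
    obtain ⟨N, hN, hd⟩ := delta_int q l hq hl
    refine ⟨N, hN, ?_⟩
    have h2 : q ∣ 1 - l * lstar := Int.modEq_iff_dvd.mp h1
    obtain ⟨e, he⟩ := hd
    obtain ⟨f, hf⟩ := h2
    have h3 : q ∣ l * (lstar - N) := ⟨-f - e, by linear_combination - hf - he⟩
    exact Int.modEq_iff_dvd.mpr ((hl.symm).dvd_of_dvd_mul_left h3)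
  · intro m hm
    obtain ⟨u, v, huv⟩ := id hm
    have hu : IsCoprime u q := ⟨m, v, by linarith⟩
    obtain ⟨N, hN, hd⟩ := delta_int q u hq hu
    refine ⟨u, hu, N, hN, ?_⟩
    obtain ⟨e, he⟩ := hd
    have h3 : q ∣ u * (m - N) := ⟨-v - e, by linear_combination huv - he⟩
    exact Int.modEq_iff_dvd.mpr ((hu.symm).dvd_of_dvd_mul_left h3)
  · intro l₁ l₂ n₁ n₂ h1 h2 e1 e2 hmod
    obtain ⟨N₁, hN₁, hd₁⟩ := delta_int q l₁ hq h1
    obtain ⟨N₂, hN₂, hd₂⟩ := delta_int q l₂ hq h2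
    have g1 : n₁ = N₁ := by exact_mod_cast e1.trans hN₁.symm
    have g2 : n₂ = N₂ := by exact_mod_cast e2.trans hN₂.symm
    subst g1 g2
    obtain ⟨e, he⟩ := hd₁
    obtain ⟨f, hf⟩ := hd₂
    obtain ⟨g, hg⟩ := Int.modEq_iff_dvd.mp hmod
    exact Int.modEq_iff_dvd.mpr ⟨-l₂ * e + l₁ * f - l₁ * l₂ * g,
      by linear_combination (-l₂) * he + l₁ * hf - l₁ * l₂ * hg⟩
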